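/- Assume on a null hypersurface (n^{(2)}=0) that K = μγ for a constant μ. Then the contraction of the identity for Q with n gives Q_c n^c = −2 𝕊(n,n) + 2 L_n(𝔎(n) − μ) + (𝔎(n) − μ) tr_P U, starting from Q_c = −2𝕊_{ac}n^a + 2L_n 𝔎_c − 2P^{ab}U_{cb}𝔎_a + (2κ_n + tr_P U)𝔎_c + 2𝔎(n)(r−s)_c + P^{ab}∇̊_a K_{bc} − (1/2)P^{ab}∇̊_c K_{ab} + (tr_P Y − n(ℓ^{(2)}))K_{cd}n^d − 2P^{bd}(r+s)_b K_{dc}. -/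
import Mathlib


/-- Null hypersurface data (`n2 = 0`): `r = Y(n,·)`, `s = ((1/2)dℓ)(n,·)`,
`κ = κ_n = −r(n)`, `U = (1/2)L_n γ` (so `U(n,·) = 0` and `s(n) = 0`),
`γ(n,·) = 0`, `ℓ(n) = 1`.  `K` (`𝒦_{ab}`), `Kf` (`𝔎_a`), `S` (`𝕊_{ab}`)
are the hypersurface-data components of an ambient deformation tensor and
`Q` is the tangential part of `𝒬`, given by the displayed formula `hQ`
(with `DK a b c = ∇̊_a K_{bc}`, `trPU = tr_P U`, `trPY = tr_P Y`,
`Kn = 𝔎(n)`, `Snn = 𝕊(n,n)`, `LnKn = L_n(𝔎(n))`, `nℓ2 = n(ℓ2)`).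
Assume `K = μγ` for a constant `μ`.  Then
`Q_c n^c = −2 𝕊(n,n) + 2 L_n(𝔎(n) − μ) + (𝔎(n) − μ) tr_P U`. -/
theorem null_Q_contraction {ι : Type*} [Fintype ι]
    (Q Kf LnKf r s ℓ n : ι → ℝ)
    (S P U Y γ K : ι → ι → ℝ) (DK Dγ : ι → ι → ι → ℝ)
    (κ μ LnKn nℓ2 trPU trPY Kn Snn : ℝ)
    (hPsymm : ∀ a b, P a b = P b a)
    (hUsymm : ∀ a b, U a b = U b a)
    (hγsymm : ∀ a b, γ a b = γ b a)
    (htrPU : trPU = ∑ a, ∑ b, P a b * U a b)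
    (htrPY : trPY = ∑ a, ∑ b, P a b * Y a b)
    (hKn : Kn = ∑ a, Kf a * n a)
    (hSnn : Snn = ∑ a, ∑ c, S a c * n a * n c)
    (hLnKn : LnKn = ∑ c, n c * LnKf c)
    (hγn : ∀ a, (∑ b, γ a b * n b) = 0)
    (hUn : ∀ a, (∑ b, U a b * n b) = 0)
    (hsn : (∑ a, s a * n a) = 0)
    (hrn : (∑ a, r a * n a) = -κ)
    (hℓn : (∑ a, ℓ a * n a) = 1)
    (hK : ∀ a b, K a b = μ * γ a b)
    (hDK : ∀ a b c, DK a b c = μ * Dγ a b c)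
    (hDγ : ∀ a b c, Dγ a b c = -(ℓ c * U a b) - ℓ b * U a c)
    (hQ : ∀ c, Q c =
      -2 * (∑ a, S a c * n a) + 2 * LnKf c
      - 2 * (∑ a, ∑ b, P a b * U c b * Kf a)
      + (2 * κ + trPU) * Kf c + 2 * Kn * (r c - s c)
      + (∑ a, ∑ b, P a b * DK a b c)
      - (1/2) * (∑ a, ∑ b, P a b * DK c a b)
      + (trPY - nℓ2) * (∑ d, K c d * n d)
      - 2 * (∑ b, ∑ d, P b d * (r b + s b) * K d c)) :
    (∑ c, Q c * n c) = -2 * Snn + 2 * LnKn + (Kn - μ) * trPU := by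
  have hUn' : ∀ a, (∑ b, U b a * n b) = 0 := fun a => by
    rw [← hUn a]; exact Finset.sum_congr rfl fun b _ => by rw [hUsymm]
  have e1 : (∑ c, -2 * (∑ a, S a c * n a) * n c) = -2 * Snn := by
    rw [hSnn]
    rw [show (∑ a, ∑ c, S a c * n a * n c) = ∑ c, ∑ a, S a c * n a * n c from
      Finset.sum_comm]
    rw [Finset.mul_sum]
    refine Finset.sum_congr rfl fun c _ => ?_
    rw [mul_assoc, Finset.sum_mul]
  have e2 : (∑ c, 2 * LnKf c * n c) = 2 * LnKn := by
    rw [hLnKn, Finset.mul_sum]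
    exact Finset.sum_congr rfl fun c _ => by ring
  have e3 : (∑ c, 2 * (∑ a, ∑ b, P a b * U c b * Kf a) * n c) = 0 := by
    have : (∑ c, 2 * (∑ a, ∑ b, P a b * U c b * Kf a) * n c)
        = ∑ a, ∑ b, 2 * P a b * Kf a * (∑ c, U c b * n c) := by
      simp only [Finset.mul_sum, Finset.sum_mul]
      rw [Finset.sum_comm]
      refine Finset.sum_congr rfl fun a _ => ?_
      rw [Finset.sum_comm]
      exact Finset.sum_congr rfl fun b _ => Finset.sum_congr rfl fun c _ => by ring
    rw [this]
    simp [hUn']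
  have e4 : (∑ c, (2 * κ + trPU) * Kf c * n c) = (2 * κ + trPU) * Kn := by
    rw [hKn, Finset.mul_sum]
    exact Finset.sum_congr rfl fun c _ => by ring
  have e5 : (∑ c, 2 * Kn * (r c - s c) * n c) = 2 * Kn * (-κ) := by
    have : (∑ c, 2 * Kn * (r c - s c) * n c)
        = 2 * Kn * ((∑ c, r c * n c) - ∑ c, s c * n c) := by
      rw [← Finset.sum_sub_distrib, Finset.mul_sum]
      exact Finset.sum_congr rfl fun c _ => by ring
    rw [this, hrn, hsn]; ring
  have e6 : (∑ c, (∑ a, ∑ b, P a b * DK a b c) * n c) = -μ * trPU := by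
    have : (∑ c, (∑ a, ∑ b, P a b * DK a b c) * n c)
        = ∑ a, ∑ b, ((-μ * (P a b * U a b)) * (∑ c, ℓ c * n c)
          + (-μ * (P a b * ℓ b)) * (∑ c, U a c * n c)) := by
      calc (∑ c, (∑ a, ∑ b, P a b * DK a b c) * n c)
          = ∑ c, ∑ a, ∑ b, P a b * DK a b c * n c := by
            refine Finset.sum_congr rfl fun c _ => ?_
            rw [Finset.sum_mul]
            exact Finset.sum_congr rfl fun a _ => Finset.sum_mul _ _ _
        _ = ∑ a, ∑ b, ∑ c, P a b * DK a b c * n c := by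
            rw [Finset.sum_comm]
            exact Finset.sum_congr rfl fun a _ => Finset.sum_comm
        _ = ∑ a, ∑ b, ((-μ * (P a b * U a b)) * (∑ c, ℓ c * n c)
            + (-μ * (P a b * ℓ b)) * (∑ c, U a c * n c)) := by
            refine Finset.sum_congr rfl fun a _ => Finset.sum_congr rfl fun b _ => ?_
            rw [Finset.mul_sum, Finset.mul_sum, ← Finset.sum_add_distrib]
            exact Finset.sum_congr rfl fun c _ => by rw [hDK, hDγ]; ring
    rw [this]
    simp only [hℓn, hUn, mul_zero, mul_one, add_zero]
    rw [htrPU, Finset.mul_sum]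
    exact Finset.sum_congr rfl fun a _ => by rw [Finset.mul_sum]
  have e7 : (∑ c, 1/2 * (∑ a, ∑ b, P a b * DK c a b) * n c) = 0 := by
    have : (∑ c, 1/2 * (∑ a, ∑ b, P a b * DK c a b) * n c)
        = ∑ a, ∑ b, ((-μ/2 * (P a b * ℓ b)) * (∑ c, U c a * n c)
          + (-μ/2 * (P a b * ℓ a)) * (∑ c, U c b * n c)) := by
      calc (∑ c, 1/2 * (∑ a, ∑ b, P a b * DK c a b) * n c)
          = ∑ c, ∑ a, ∑ b, 1/2 * (P a b * DK c a b) * n c := by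
            refine Finset.sum_congr rfl fun c _ => ?_
            rw [mul_assoc, Finset.sum_mul, Finset.mul_sum]
            refine Finset.sum_congr rfl fun a _ => ?_
            rw [Finset.sum_mul, Finset.mul_sum]
            exact Finset.sum_congr rfl fun b _ => by ring
        _ = ∑ a, ∑ b, ∑ c, 1/2 * (P a b * DK c a b) * n c := by
            rw [Finset.sum_comm]
            exact Finset.sum_congr rfl fun a _ => Finset.sum_comm
        _ = ∑ a, ∑ b, ((-μ/2 * (P a b * ℓ b)) * (∑ c, U c a * n c)
            + (-μ/2 * (P a b * ℓ a)) * (∑ c, U c b * n c)) := by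
            refine Finset.sum_congr rfl fun a _ => Finset.sum_congr rfl fun b _ => ?_
            rw [Finset.mul_sum, Finset.mul_sum, ← Finset.sum_add_distrib]
            exact Finset.sum_congr rfl fun c _ => by rw [hDK, hDγ]; ring
    rw [this]
    simp [hUn']
  have e8 : (∑ c, (trPY - nℓ2) * (∑ d, K c d * n d) * n c) = 0 := by
    refine Finset.sum_eq_zero fun c _ => ?_
    have : (∑ d, K c d * n d) = μ * ∑ d, γ c d * n d := by
      rw [Finset.mul_sum]
      exact Finset.sum_congr rfl fun d _ => by rw [hK]; ring
    rw [this, hγn]; ring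
  have e9 : (∑ c, 2 * (∑ b, ∑ d, P b d * (r b + s b) * K d c) * n c) = 0 := by
    have : (∑ c, 2 * (∑ b, ∑ d, P b d * (r b + s b) * K d c) * n c)
        = ∑ b, ∑ d, (2 * μ * (P b d * (r b + s b))) * (∑ c, γ d c * n c) := by
      simp only [hK, Finset.mul_sum, Finset.sum_mul]
      rw [Finset.sum_comm]
      refine Finset.sum_congr rfl fun b _ => ?_
      rw [Finset.sum_comm]
      exact Finset.sum_congr rfl fun d _ => Finset.sum_congr rfl fun c _ => by ring
    rw [this]
    simp [hγn]
  have expand : (∑ c, Q c * n c)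
      = (∑ c, -2 * (∑ a, S a c * n a) * n c) + (∑ c, 2 * LnKf c * n c)
        - (∑ c, 2 * (∑ a, ∑ b, P a b * U c b * Kf a) * n c)
        + (∑ c, (2 * κ + trPU) * Kf c * n c)
        + (∑ c, 2 * Kn * (r c - s c) * n c)
        + (∑ c, (∑ a, ∑ b, P a b * DK a b c) * n c)
        - (∑ c, 1/2 * (∑ a, ∑ b, P a b * DK c a b) * n c)
        + (∑ c, (trPY - nℓ2) * (∑ d, K c d * n d) * n c)
        - (∑ c, 2 * (∑ b, ∑ d, P b d * (r b + s b) * K d c) * n c) := by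
    simp only [hQ, add_mul, sub_mul, Finset.sum_add_distrib, Finset.sum_sub_distrib]
  rw [expand, e1, e2, e3, e4, e5, e6, e7, e8, e9]
  ring
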